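/- Let A ∈ M_3(ℂ) be upper triangular with Tr(A) a nonnegative real number, and let S ∈ M_3(ℂ) be Hermitian and upper triangular (hence diagonal with real entries) with Re(A) ≤ S. Let (A_m)_{m≥1} be a sequence of strictly upper triangular matrices in M_3(ℂ) with ‖A_m‖ ≤ 1 for every m. Set α_0 = Tr(A) and α_m = Tr(A A_m*) for m ≥ 1. Then for every real r with 0 ≤ r ≤ √2 − 1, the series ∑_{m=0}^∞ |α_m| r^m converges and ∑_{m=0}^∞ |α_m| r^m ≤ Tr(S). -/

import Mathlib

open Matrix
open scoped Matrix.Norms.L2Operator ComplexOrder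

lemma scalar_key (a b c p q : ℝ) (hq : 0 ≤ q)
    (h1 : p^2 + q^2 ≤ b^2 + c^2) (h2 : q ≤ c) :
    Real.sqrt 2 * (a*p + b*q) ≤ a^2 + b^2 + c^2 := by
  have hs : Real.sqrt 2 ^ 2 = 2 := Real.sq_sqrt (by norm_num)
  have hs0 : 0 ≤ Real.sqrt 2 := Real.sqrt_nonneg 2
  nlinarith [sq_nonneg (Real.sqrt 2 * a - p), sq_nonneg (b - Real.sqrt 2 * q),
    sq_nonneg (c - q), sq_nonneg (c + q)]

lemma mulVec_norm_sq (B : Matrix (Fin 3) (Fin 3) ℂ) (hBn : ‖B‖ ≤ 1) (v : Fin 3 → ℂ) :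
    ∑ i, ‖(B *ᵥ v) i‖^2 ≤ ∑ i, ‖v i‖^2 := by
  have h := B.l2_opNorm_mulVec ((EuclideanSpace.equiv (Fin 3) ℂ).symm v)
  rw [EuclideanSpace.norm_eq, EuclideanSpace.norm_eq] at h
  have h1 : Real.sqrt (∑ i, ‖(B *ᵥ v) i‖^2) ≤ Real.sqrt (∑ i, ‖v i‖^2) := by
    calc Real.sqrt (∑ i, ‖(B *ᵥ v) i‖^2) ≤ ‖B‖ * Real.sqrt (∑ i, ‖v i‖^2) := h
    _ ≤ 1 * Real.sqrt (∑ i, ‖v i‖^2) := by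
        apply mul_le_mul_of_nonneg_right hBn (Real.sqrt_nonneg _)
    _ = Real.sqrt (∑ i, ‖v i‖^2) := one_mul _
  have key : (∑ i, ‖(B *ᵥ v) i‖^2) ≤ ∑ i, ‖v i‖^2 :=
    (Real.sqrt_le_sqrt_iff (by positivity)).mp h1
  simpa using key

lemma num_radius (B : Matrix (Fin 3) (Fin 3) ℂ) (hB : ∀ i j : Fin 3, j ≤ i → B i j = 0)
    (hBn : ‖B‖ ≤ 1) (v : Fin 3 → ℂ) :
    Real.sqrt 2 * ‖∑ i, (starRingEnd ℂ) (v i) * (B *ᵥ v) i‖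
      ≤ ∑ i, ‖v i‖^2 := by
  have hB00 : B 0 0 = 0 := hB 0 0 (by decide)
  have hB10 : B 1 0 = 0 := hB 1 0 (by decide)
  have hB11 : B 1 1 = 0 := hB 1 1 (by decide)
  have hB20 : B 2 0 = 0 := hB 2 0 (by decide)
  have hB21 : B 2 1 = 0 := hB 2 1 (by decide)
  have hB22 : B 2 2 = 0 := hB 2 2 (by decide)
  set w := B *ᵥ v with hw
  have hw1 : w 1 = B 1 2 * v 2 := by
    simp [hw, Matrix.mulVec, dotProduct, Fin.sum_univ_three, hB10, hB11]
  have hw2 : w 2 = 0 := by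
    simp [hw, Matrix.mulVec, dotProduct, Fin.sum_univ_three, hB20, hB21, hB22]
  -- |B 1 2| ≤ 1
  have hB12 : ‖B 1 2‖ ≤ 1 := by
    have h := mulVec_norm_sq B hBn ![0, 0, 1]
    simp [Fin.sum_univ_three, Matrix.mulVec, dotProduct, hB10, hB11, hB20, hB21, hB22] at h
    nlinarith [norm_nonneg (B 0 2), norm_nonneg (B 1 2), sq_nonneg (‖B 0 2‖)]
  -- norm bound with first coordinate zeroed
  have hweq : B *ᵥ ![0, v 1, v 2] = w := by
    funext i
    simp [hw, Matrix.mulVec, dotProduct, Fin.sum_univ_three, hB i 0 (Fin.zero_le i)]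
  have key := mulVec_norm_sq B hBn ![0, v 1, v 2]
  rw [hweq] at key
  simp only [Fin.sum_univ_three, Matrix.cons_val_zero, Matrix.cons_val_one, Matrix.head_cons,
    Matrix.cons_val_two, Matrix.tail_cons, map_zero] at key
  set a := ‖v 0‖
  set b := ‖v 1‖
  set c := ‖v 2‖
  set p := ‖w 0‖
  set q := ‖w 1‖
  have hkey : p^2 + q^2 ≤ b^2 + c^2 := by
    have : ‖w 2‖ ^ 2 = 0 := by rw [hw2]; simp
    rw [norm_zero] at key
    nlinarith [key]
  have hq : 0 ≤ q := norm_nonneg _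
  have hqc : q ≤ c := by
    rw [show q = ‖B 1 2‖ * c by rw [← norm_mul, ← hw1]]
    calc ‖B 1 2‖ * c ≤ 1 * c := by
          exact mul_le_mul_of_nonneg_right hB12 (norm_nonneg _)
    _ = c := one_mul _
  have habs : ‖∑ i, (starRingEnd ℂ) (v i) * w i‖ ≤ a * p + b * q := by
    rw [Fin.sum_univ_three, hw2, mul_zero, add_zero]
    calc ‖(starRingEnd ℂ) (v 0) * w 0 + (starRingEnd ℂ) (v 1) * w 1‖
        ≤ ‖(starRingEnd ℂ) (v 0) * w 0‖ + ‖(starRingEnd ℂ) (v 1) * w 1‖ :=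
          norm_add_le _ _
    _ = a * p + b * q := by simp [norm_mul]; rfl
  calc Real.sqrt 2 * ‖∑ i, (starRingEnd ℂ) (v i) * w i‖
      ≤ Real.sqrt 2 * (a * p + b * q) :=
        mul_le_mul_of_nonneg_left habs (Real.sqrt_nonneg 2)
  _ ≤ a^2 + b^2 + c^2 := scalar_key a b c p q hq hkey hqc
  _ = ∑ i, ‖v i‖^2 := by rw [Fin.sum_univ_three]

lemma trace_bound (M : Matrix (Fin 3) (Fin 3) ℂ) (hM : M.PosSemidef)
    (B : Matrix (Fin 3) (Fin 3) ℂ) (hB : ∀ i j : Fin 3, j ≤ i → B i j = 0) (hBn : ‖B‖ ≤ 1) :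
    Real.sqrt 2 * ‖(M * Bᴴ).trace‖ ≤ M.trace.re := by
  obtain ⟨C, rfl⟩ : ∃ C : Matrix (Fin 3) (Fin 3) ℂ, M = Cᴴ * C := by
    open MatrixOrder in exact CStarAlgebra.nonneg_iff_eq_star_mul_self.mp hM.nonneg
  set v : Fin 3 → Fin 3 → ℂ := fun k j => (starRingEnd ℂ) (C k j) with hv
  have claim1 : (Cᴴ * C * Bᴴ).trace
      = ∑ k, (starRingEnd ℂ) (∑ i, (starRingEnd ℂ) (v k i) * (B *ᵥ v k) i) := by
    simp only [Matrix.trace, Matrix.diag, Matrix.mul_apply, Matrix.conjTranspose_apply,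
      Matrix.mulVec, dotProduct, hv, Fin.sum_univ_three, map_add, _root_.map_mul,
      Complex.conj_conj, map_sum, Complex.star_def]
    ring
  have claim2 : (Cᴴ * C).trace.re = ∑ k, ∑ j, ‖v k j‖^2 := by
    simp only [Matrix.trace, Matrix.diag, Matrix.mul_apply, Matrix.conjTranspose_apply,
      Fin.sum_univ_three, Complex.add_re, Complex.star_def, hv, Complex.norm_conj]
    have : ∀ z : ℂ, ((starRingEnd ℂ) z * z).re = ‖z‖ ^ 2 := by
      intro z
      rw [mul_comm, Complex.mul_conj, Complex.normSq_eq_norm_sq, Complex.ofReal_re]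
    simp only [this]
    ring
  calc Real.sqrt 2 * ‖(Cᴴ * C * Bᴴ).trace‖
      = Real.sqrt 2 * ‖∑ k, (starRingEnd ℂ)
          (∑ i, (starRingEnd ℂ) (v k i) * (B *ᵥ v k) i)‖ := by rw [claim1]
  _ ≤ Real.sqrt 2 * ∑ k, ‖(starRingEnd ℂ)
          (∑ i, (starRingEnd ℂ) (v k i) * (B *ᵥ v k) i)‖ := by
        apply mul_le_mul_of_nonneg_left (norm_sum_le _ _) (Real.sqrt_nonneg 2)
  _ = ∑ k, Real.sqrt 2 * ‖∑ i, (starRingEnd ℂ) (v k i) * (B *ᵥ v k) i‖ := by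
        rw [Finset.mul_sum]
        exact Finset.sum_congr rfl fun k _ => by rw [Complex.norm_conj]
  _ ≤ ∑ k, ∑ j, ‖v k j‖^2 :=
        Finset.sum_le_sum fun k _ => num_radius B hB hBn (v k)
  _ = (Cᴴ * C).trace.re := claim2.symm

lemma trace_zero (X B : Matrix (Fin 3) (Fin 3) ℂ) (hB : ∀ i j : Fin 3, j ≤ i → B i j = 0)
    (hX : ∀ i j : Fin 3, i < j → X i j = 0) : (X * Bᴴ).trace = 0 := by
  simp only [Matrix.trace, Matrix.diag, Matrix.mul_apply, Matrix.conjTranspose_apply]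
  apply Finset.sum_eq_zero; intro i _
  apply Finset.sum_eq_zero; intro j _
  rcases le_or_gt j i with h | h
  · rw [hB i j h]; simp
  · rw [hX i j h]; simp

/-- **Bohr's inequality for 3×3 upper triangular matrices** (radius `√2 - 1`). -/
theorem bohr_matrix_three_by_three
    (A S : Matrix (Fin 3) (Fin 3) ℂ)
    (hA_ut : ∀ i j : Fin 3, j < i → A i j = 0)
    (hA_tr : 0 ≤ A.trace)
    (hS_herm : S.IsHermitian)
    (hS_ut : ∀ i j : Fin 3, j < i → S i j = 0)
    (hAS : (S - (2 : ℂ)⁻¹ • (A + Aᴴ)).PosSemidef)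
    (B : ℕ → Matrix (Fin 3) (Fin 3) ℂ)
    (hB_sut : ∀ m : ℕ, 1 ≤ m → ∀ i j : Fin 3, j ≤ i → B m i j = 0)
    (hB_norm : ∀ m : ℕ, 1 ≤ m → ‖B m‖ ≤ 1)
    (α : ℕ → ℂ)
    (hα0 : α 0 = A.trace)
    (hα : ∀ m : ℕ, 1 ≤ m → α m = (A * (B m)ᴴ).trace)
    (r : ℝ) (hr0 : 0 ≤ r) (hr1 : r ≤ Real.sqrt 2 - 1) :
    Summable (fun m : ℕ => ‖α m‖ * r ^ m) ∧
      ∑' m : ℕ, ‖α m‖ * r ^ m ≤ S.trace.re := by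
  have hs2 : Real.sqrt 2 ^ 2 = 2 := Real.sq_sqrt (by norm_num)
  have hs0 : 0 ≤ Real.sqrt 2 := Real.sqrt_nonneg 2
  have hslt : Real.sqrt 2 < 2 := by nlinarith
  have hrlt : r < 1 := by nlinarith
  have h1r : 0 < 1 - r := by linarith
  set M := S - (2 : ℂ)⁻¹ • (A + Aᴴ) with hMdef
  set d := M.trace.re with hd
  -- trace facts
  have hA_im : A.trace.im = 0 := by
    have := Complex.le_def.mp hA_tr
    simpa using this.2.symm
  have hA_re : 0 ≤ A.trace.re := by
    have := Complex.le_def.mp hA_tr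
    simpa using this.1
  have htrA : A.trace = ((A.trace.re : ℝ) : ℂ) := Complex.ext (by simp) (by simp [hA_im])
  have habs0 : ‖α 0‖ = A.trace.re := by
    rw [hα0, htrA, Complex.norm_real, Real.norm_of_nonneg hA_re]
    simp
  have hd_eq : d = S.trace.re - A.trace.re := by
    have h1 : M.trace = S.trace - (2:ℂ)⁻¹ * (A.trace + star A.trace) := by
      rw [hMdef, trace_sub, trace_smul, trace_add, trace_conjTranspose, smul_eq_mul]
    have h2 : A.trace + star A.trace = ((2 * A.trace.re : ℝ) : ℂ) := by
      rw [Complex.star_def, Complex.add_conj]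
    rw [hd, h1, h2]
    simp [Complex.sub_re, Complex.mul_re]
    try ring
  have hd0 : 0 ≤ d := by
    have := trace_bound M hAS 0 (by simp) (by simp)
    simp at this
    nlinarith [this]
  -- per-term bound
  have hαm : ∀ m : ℕ, 1 ≤ m → ‖α m‖ ≤ Real.sqrt 2 * d := by
    intro m hm
    have hz1 : (S * (B m)ᴴ).trace = 0 :=
      trace_zero S (B m) (hB_sut m hm) (fun i j hij => by
        rw [← hS_herm.apply i j, hS_ut j i hij, star_zero])
    have hz2 : (Aᴴ * (B m)ᴴ).trace = 0 :=
      trace_zero Aᴴ (B m) (hB_sut m hm) (fun i j hij => by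
        rw [Matrix.conjTranspose_apply, hA_ut j i hij, star_zero])
    have hMtr : (M * (B m)ᴴ).trace = -(2:ℂ)⁻¹ * (A * (B m)ᴴ).trace := by
      have : (M * (B m)ᴴ).trace = (S * (B m)ᴴ).trace
          - (2:ℂ)⁻¹ * ((A * (B m)ᴴ).trace + (Aᴴ * (B m)ᴴ).trace) := by
        rw [hMdef, Matrix.sub_mul, Matrix.smul_mul, Matrix.add_mul, trace_sub, trace_smul,
          trace_add, smul_eq_mul]
      rw [this, hz1, hz2]; ring
    have h1 := trace_bound M hAS (B m) (hB_sut m hm) (hB_norm m hm)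
    have h2 : ‖(M * (B m)ᴴ).trace‖ = 2⁻¹ * ‖α m‖ := by
      rw [hα m hm, hMtr, norm_mul]
      norm_num
    rw [h2] at h1
    nlinarith [norm_nonneg (α m)]
  -- series
  set g : ℕ → ℝ := fun m => ‖α m‖ * r ^ m with hg
  have hgnn : ∀ m, 0 ≤ g m := fun m => mul_nonneg (norm_nonneg _) (pow_nonneg hr0 _)
  have hbound : ∀ m : ℕ, g (m + 1) ≤ (Real.sqrt 2 * d * r) * r ^ m := by
    intro m
    have := hαm (m+1) (Nat.le_add_left 1 m)
    calc g (m+1) = ‖α (m+1)‖ * r ^ (m+1) := rfl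
    _ ≤ (Real.sqrt 2 * d) * r ^ (m+1) :=
        mul_le_mul_of_nonneg_right this (pow_nonneg hr0 _)
    _ = (Real.sqrt 2 * d * r) * r ^ m := by rw [pow_succ]; ring
  have hgeo : Summable (fun m : ℕ => (Real.sqrt 2 * d * r) * r ^ m) :=
    (summable_geometric_of_lt_one hr0 hrlt).mul_left _
  have hsum1 : Summable (fun m : ℕ => g (m + 1)) :=
    Summable.of_nonneg_of_le (fun m => hgnn _) hbound hgeo
  have hsum : Summable g := (summable_nat_add_iff 1).mp hsum1
  refine ⟨hsum, ?_⟩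
  have htsum : ∑' m, g m = g 0 + ∑' m, g (m + 1) := hsum.tsum_eq_zero_add
  have htail : ∑' m, g (m + 1) ≤ Real.sqrt 2 * d * r * (1 - r)⁻¹ := by
    calc ∑' m, g (m + 1) ≤ ∑' m, (Real.sqrt 2 * d * r) * r ^ m :=
          Summable.tsum_le_tsum hbound hsum1 hgeo
    _ = (Real.sqrt 2 * d * r) * ∑' m : ℕ, r ^ m := tsum_mul_left
    _ = Real.sqrt 2 * d * r * (1 - r)⁻¹ := by rw [tsum_geometric_of_lt_one hr0 hrlt]
  have hfinal : Real.sqrt 2 * d * r * (1 - r)⁻¹ ≤ d := by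
    rw [← div_eq_mul_inv, div_le_iff₀ h1r]
    nlinarith [mul_le_mul_of_nonneg_left hr1 hd0]
  have hg0 : g 0 = A.trace.re := by simp [hg, habs0]
  calc ∑' m, g m = g 0 + ∑' m, g (m + 1) := htsum
  _ ≤ A.trace.re + d := by rw [hg0]; linarith
  _ = S.trace.re := by rw [hd_eq]; ring
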